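/- A polymonad on exactly the two functors {R, Id} whose bind set corresponds to the natural transformations {η : Id∘Id ⇒ R, μ : R∘R ⇒ R, id_R : R∘Id ⇒ R, id_Id : Id∘Id ⇒ Id} gives rise to a monad (R, η, μ). In particular, the polymonad Associativity law implies the monad left unit law μ ∘ (η R) = id, the right unit law μ ∘ (R η) = id, and monad associativity μ ∘ (μ R) = μ ∘ (R μ). -/

import Mathlib

open CategoryTheory

universe v u

/-- A categorical polymonad: a set of endofunctors containing the identity functor,
and a set of joins `μ : M N ⇒ P` (natural transformations `N ⋙ M ⟶ P`,
i.e. with `M` applied outermost), satisfying the Identity, Diamond and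
Associativity laws. -/
structure CatPolymonad (C : Type u) [Category.{v} C] where
  F : Set (C ⥤ C)
  J : ∀ M N P : C ⥤ C, Set ((N ⋙ M) ⟶ P)
  id_mem : 𝟭 C ∈ F
  id_join_left : ∀ M ∈ F, (Functor.leftUnitor M).hom ∈ J M (𝟭 C) M
  id_join_right : ∀ M ∈ F, (Functor.rightUnitor M).hom ∈ J (𝟭 C) M M
  diamond : ∀ R S T W : C ⥤ C, R ∈ F → S ∈ F → T ∈ F → W ∈ F →
    ((∃ U ∈ F, (∃ j, j ∈ J R S U) ∧ (∃ j, j ∈ J U T W)) ↔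
     (∃ V ∈ F, (∃ j, j ∈ J S T V) ∧ (∃ j, j ∈ J R V W)))
  assoc : ∀ (R S T U V W : C ⥤ C),
    ∀ μ1 ∈ J R S U, ∀ μ2 ∈ J U T W, ∀ μ3 ∈ J S T V, ∀ μ4 ∈ J R V W,
      Functor.whiskerLeft T μ1 ≫ μ2 = Functor.whiskerRight μ3 R ≫ μ4

/-- A polymonad on `{R, Id}` whose joins are exactly
`{η : Id Id ⇒ R, μ : R R ⇒ R, id_R : R Id ⇒ R, id_Id : Id Id ⇒ Id}`
gives rise to a monad `(R, η, μ)`: the monad left unit, right unit and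
associativity laws hold. -/
theorem polymonad_gives_monad {C : Type u} [Category.{v} C] (P : CatPolymonad C)
    (R : C ⥤ C) (hF : P.F = {R, 𝟭 C})
    (η : (𝟭 C ⋙ 𝟭 C) ⟶ R) (μ : (R ⋙ R) ⟶ R)
    (hη : η ∈ P.J (𝟭 C) (𝟭 C) R) (hμ : μ ∈ P.J R R R)
    (hJ : ∀ M N Q : C ⥤ C, P.J M N Q =
      { j : (N ⋙ M) ⟶ Q |
        HEq j η ∨ HEq j μ ∨ HEq j (Functor.leftUnitor R).hom ∨
        HEq j (Functor.leftUnitor (𝟭 C)).hom }) :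
    ((Functor.rightUnitor R).inv ≫
        Functor.whiskerLeft R ((Functor.leftUnitor (𝟭 C)).inv ≫ η) ≫ μ = 𝟙 R) ∧
    ((Functor.leftUnitor R).inv ≫
        Functor.whiskerRight ((Functor.leftUnitor (𝟭 C)).inv ≫ η) R ≫ μ = 𝟙 R) ∧
    (Functor.whiskerLeft R μ ≫ μ = Functor.whiskerRight μ R ≫ μ) := by
  have hR : R ∈ P.F := by rw [hF]; exact Set.mem_insert _ _
  have h1 := P.assoc (𝟭 C) (𝟭 C) R R R R η hη μ hμ
    (Functor.rightUnitor R).hom (P.id_join_right R hR)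
    (Functor.rightUnitor R).hom (P.id_join_right R hR)
  have h2 := P.assoc R (𝟭 C) (𝟭 C) R R R
    (Functor.leftUnitor R).hom (P.id_join_left R hR)
    (Functor.leftUnitor R).hom (P.id_join_left R hR)
    η hη μ hμ
  have h3 := P.assoc R R R R R R μ hμ μ hμ μ hμ μ hμ
  refine ⟨?_, ?_, h3⟩
  · ext X
    have := congrArg (fun t => t.app X) h1
    simp only [NatTrans.comp_app, Functor.whiskerLeft_app, Functor.whiskerRight_app] at this ⊢
    simpa using this
  · ext X
    have := congrArg (fun t => t.app X) h2
    simp only [NatTrans.comp_app, Functor.whiskerLeft_app, Functor.whiskerRight_app] at this ⊢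
    simpa using this.symm
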